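/- For real numbers H and S with S > 0, H ≠ 0, and satisfying both 8H·f₃ − 7H²S + H⁴ = 0 and 8H·f₃² + (H⁴ − 11H²S − 2S²)·f₃ + 5H³S² − H⁵S = 0 for some real f₃, it follows that 2H⁴ − 7H²S + 7S² = 0, which is impossible; hence no such H, S, f₃ exist. -/
import Mathlib


theorem stmt_5 :
    ¬ ∃ (H S f3 : ℝ), S > 0 ∧ H ≠ 0 ∧
      8 * H * f3 - 7 * H ^ 2 * S + H ^ 4 = 0 ∧
      8 * H * f3 ^ 2 + (H ^ 4 - 11 * H ^ 2 * S - 2 * S ^ 2) * f3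
        + 5 * H ^ 3 * S ^ 2 - H ^ 5 * S = 0 := by
  rintro ⟨H, S, f3, hS, hH, e1, e2⟩
  have hH2 : 0 < H ^ 2 := by positivity
  have key : 2 * H ^ 2 * S * (2 * H ^ 4 - 7 * H ^ 2 * S + 7 * S ^ 2) = 0 := by
    have h1 : 8 * H * f3 = 7 * H ^ 2 * S - H ^ 4 := by linarith
    linear_combination (8 * H * f3 - 4 * H ^ 2 * S - 2 * S ^ 2) * e1 - 8 * H * e2
  have hpos : 0 < 2 * H ^ 4 - 7 * H ^ 2 * S + 7 * S ^ 2 := by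
    nlinarith [sq_nonneg (4 * H ^ 2 - 7 * S), sq_nonneg S]
  nlinarith [mul_pos (mul_pos (mul_pos two_pos hH2) hS) hpos]
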